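/- arXiv:2002.11816 — 6 statements merged into one kernel-verified Lean document; each statement's English description precedes it below -/
import Mathlib

section
/- Let a, b, s be real numbers with 0 ≤ a < b, 0 < s, and 2·s·b ≤ b − a. Define the sequence θ : ℕ → ℝ by θ 1 = b and θ (k+1) = ((θ k − a)·θ k·(1 − s) + (b − θ k)·θ k·(1 + s))/(b − a). Then the sequence k ↦ (θ k − a)/(b − a) converges to 1/2 as k → ∞. -/
open Filter Topology

theorem vu_label_probability_tendsto_half
    (a b s : ℝ) (ha : 0 ≤ a) (hab : a < b) (hs : 0 < s)
    (hsb : 2 * s * b ≤ b - a) (θ : ℕ → ℝ) (hθ1 : θ 1 = b)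
    (hrec : ∀ k, 1 ≤ k → θ (k + 1) =
      ((θ k - a) * θ k * (1 - s) + (b - θ k) * θ k * (1 + s)) / (b - a)) :
    Tendsto (fun k => (θ k - a) / (b - a)) atTop (𝓝 (1 / 2)) := by
  have hba : (0:ℝ) < b - a := by linarith
  have hbane : b - a ≠ 0 := ne_of_gt hba
  set m : ℝ := (a + b) / 2 with hm
  have hb0 : 0 < b := lt_of_le_of_lt ha hab
  have hm0 : 0 < m := by rw [hm]; linarith
  have hmb : m < b := by rw [hm]; linarith
  have hmb' : 2 * s * m ≤ 2 * s * b := by nlinarith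
  set q : ℝ := 1 - 2 * s * m / (b - a) with hq
  have hq0 : 0 ≤ q := by
    have h1 : 2 * s * m / (b - a) ≤ 1 := by
      rw [div_le_one hba]; linarith
    rw [hq]; linarith
  have hq1 : q < 1 := by
    have : 0 < 2 * s * m / (b - a) := by positivity
    rw [hq]; linarith
  have inv : ∀ k, 1 ≤ k → m ≤ θ k ∧ θ k ≤ b ∧ θ k - m ≤ (b - m) * q ^ (k - 1) := by
    intro k hk
    induction k, hk using Nat.le_induction with
    | base =>
      refine ⟨by rw [hθ1]; linarith, le_of_eq hθ1, ?_⟩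
      simp [hθ1]
    | succ k hk ih =>
      obtain ⟨h1, h2, h3⟩ := ih
      have key : θ (k + 1) - m = (θ k - m) * (1 - 2 * s * θ k / (b - a)) := by
        rw [hrec k hk]
        field_simp
        ring
      have hf0 : 0 ≤ 1 - 2 * s * θ k / (b - a) := by
        have h5 : 2 * s * θ k ≤ 2 * s * b := by nlinarith
        have : 2 * s * θ k / (b - a) ≤ 1 := by rw [div_le_one hba]; linarith
        linarith
      have hf1 : 1 - 2 * s * θ k / (b - a) ≤ 1 := by
        have h6 : 0 ≤ 2 * s * θ k := by nlinarith
        have : 0 ≤ 2 * s * θ k / (b - a) := div_nonneg h6 (le_of_lt hba)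
        linarith
      have hfq : 1 - 2 * s * θ k / (b - a) ≤ q := by
        have hmono : 2 * s * m ≤ 2 * s * θ k := by nlinarith
        have : 2 * s * m / (b - a) ≤ 2 * s * θ k / (b - a) :=
          (div_le_div_iff_of_pos_right hba).mpr hmono
        rw [hq]; linarith
      have he0 : 0 ≤ θ k - m := by linarith
      refine ⟨?_, ?_, ?_⟩
      · nlinarith [mul_nonneg he0 hf0]
      · nlinarith [mul_le_mul_of_nonneg_left hf1 he0]
      · have hstep : θ (k+1) - m ≤ (θ k - m) * q := by
          rw [key]; exact mul_le_mul_of_nonneg_left hfq he0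
        calc θ (k+1) - m ≤ (θ k - m) * q := hstep
          _ ≤ ((b - m) * q ^ (k-1)) * q := mul_le_mul_of_nonneg_right h3 hq0
          _ = (b - m) * q ^ (k+1-1) := by
              have hk1 : k + 1 - 1 = (k - 1) + 1 := by omega
              rw [hk1]; ring
  have hgeo : Tendsto (fun k : ℕ => (b - m) * q ^ (k - 1)) atTop (𝓝 0) := by
    have h1 : Tendsto (fun n : ℕ => q ^ n) atTop (𝓝 0) :=
      tendsto_pow_atTop_nhds_zero_of_lt_one hq0 hq1
    have h2 : Tendsto (fun k : ℕ => k - 1) atTop atTop := tendsto_sub_atTop_nat 1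
    have h3 := (h1.comp h2).const_mul (b - m)
    simpa using h3
  have hθm : Tendsto (fun k => θ k - m) atTop (𝓝 0) := by
    apply squeeze_zero' ?_ ?_ hgeo
    · filter_upwards [eventually_ge_atTop 1] with k hk
      have := (inv k hk).1; linarith
    · filter_upwards [eventually_ge_atTop 1] with k hk
      exact (inv k hk).2.2
  have hfin : Tendsto (fun k => (θ k - m) / (b - a) + 1/2) atTop
      (𝓝 (0 / (b - a) + 1/2)) :=
    (hθm.div_const (b - a)).add_const (1/2)
  have heq : (fun k => (θ k - a) / (b - a)) = fun k => (θ k - m) / (b - a) + 1/2 := by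
    funext k
    rw [hm]
    field_simp
    ring
  rw [heq]
  simpa using hfin
end

section
/- Let a, b, s be real numbers with 0 ≤ a < b, 0 < s, and 2·s·b ≤ b − a. Define the sequence θ : ℕ → ℝ by θ 1 = b and θ (k+1) = ((θ k − a)·θ k·(1 − s) + (b − θ k)·θ k·(1 + s))/(b − a). Then θ k converges to (a + b)/2 as k → ∞. -/
open Filter Topology

theorem vu_threshold_tendsto_midpoint
    (a b s : ℝ) (ha : 0 ≤ a) (hab : a < b) (hs : 0 < s)
    (hsb : 2 * s * b ≤ b - a) (θ : ℕ → ℝ) (hθ1 : θ 1 = b)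
    (hrec : ∀ k, 1 ≤ k → θ (k + 1) =
      ((θ k - a) * θ k * (1 - s) + (b - θ k) * θ k * (1 + s)) / (b - a)) :
    Tendsto θ atTop (𝓝 ((a + b) / 2)) := by
  have hba : (0:ℝ) < b - a := sub_pos.mpr hab
  have hb0 : 0 < b := lt_of_le_of_lt ha hab
  set m : ℝ := (a + b) / 2 with hm
  set c : ℝ := 1 - s * (a + b) / (b - a) with hc
  have hsab : s * (a + b) ≤ b - a := le_trans (by nlinarith) hsb
  have hc0 : 0 ≤ c := by
    have h1 : s * (a + b) / (b - a) ≤ 1 := (div_le_one hba).mpr hsab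
    simp only [hc]; linarith
  have hc1 : c < 1 := by
    have h1 : 0 < s * (a + b) / (b - a) := by positivity
    simp only [hc]; linarith
  have hstep : ∀ k, 1 ≤ k → θ (k + 1) - m = (θ k - m) * (1 - 2 * s * θ k / (b - a)) := by
    intro k hk
    rw [hrec k hk, hm]
    field_simp
    ring
  have H : ∀ k, 1 ≤ k → m ≤ θ k ∧ θ k ≤ b ∧ θ k - m ≤ (b - m) * c ^ (k - 1) := by
    intro k hk
    induction k with
    | zero => omega
    | succ n ih =>
      rcases Nat.lt_or_ge n 1 with h | hn
      · interval_cases n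
        rw [show (0:ℕ)+1 = 1 from rfl, hθ1]
        exact ⟨by rw [hm]; linarith, le_refl b, by simp⟩
      · obtain ⟨h1, h2, h3⟩ := ih hn
        have hf0 : 0 ≤ 1 - 2 * s * θ n / (b - a) := by
          have hle : 2 * s * θ n ≤ b - a := le_trans (by nlinarith) hsb
          have := (div_le_one hba).mpr hle
          linarith
        have hfc : 1 - 2 * s * θ n / (b - a) ≤ c := by
          have hle : s * (a + b) ≤ 2 * s * θ n := by nlinarith
          have h4 : s * (a + b) / (b - a) ≤ 2 * s * θ n / (b - a) := by gcongr
          simp only [hc]; linarith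
        have heq := hstep n hn
        have hmn : 0 ≤ θ n - m := by linarith
        have hkey : θ (n + 1) - m ≤ (θ n - m) * c := by
          rw [heq]; exact mul_le_mul_of_nonneg_left hfc hmn
        have hpos : 0 ≤ θ (n + 1) - m := by
          rw [heq]; exact mul_nonneg hmn hf0
        refine ⟨by linarith, ?_, ?_⟩
        · nlinarith
        · have hn1 : n - 1 + 1 = n := Nat.succ_pred_eq_of_pos hn
          have : (θ n - m) * c ≤ (b - m) * c ^ (n - 1) * c :=
            mul_le_mul_of_nonneg_right h3 hc0
          calc θ (n + 1) - m ≤ (θ n - m) * c := hkey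
            _ ≤ (b - m) * c ^ (n - 1) * c := this
            _ = (b - m) * c ^ (n + 1 - 1) := by
                rw [Nat.add_sub_cancel]
                conv_rhs => rw [← hn1, pow_succ, ← mul_assoc]
  have hg : Tendsto (fun k : ℕ => (b - m) * c ^ (k - 1)) atTop (𝓝 0) := by
    have h1 : Tendsto (fun k : ℕ => c ^ (k - 1)) atTop (𝓝 0) :=
      (tendsto_pow_atTop_nhds_zero_of_lt_one hc0 hc1).comp
        (tendsto_sub_atTop_nat 1)
    simpa using h1.const_mul (b - m)
  have hdiff : Tendsto (fun k => θ k - m) atTop (𝓝 0) := by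
    apply squeeze_zero' ?_ ?_ hg
    · filter_upwards [eventually_ge_atTop 1] with k hk using (H k hk).1 |> fun h => by linarith
    · filter_upwards [eventually_ge_atTop 1] with k hk using (H k hk).2.2
  have := hdiff.add_const m
  simpa using this
end

section
/- Let a, b, s be real numbers with 0 ≤ a < b, 0 < s, and 2·s·b ≤ b − a. Define the sequence θ : ℕ → ℝ by θ 1 = b and θ (k+1) = ((θ k − a)·θ k·(1 − s) + (b − θ k)·θ k·(1 + s))/(b − a). Then θ k ≥ (a + b)/2 for every k ≥ 1. -/
theorem vu_threshold_ge_midpoint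
    (a b s : ℝ) (ha : 0 ≤ a) (hab : a < b) (hs : 0 < s)
    (hsb : 2 * s * b ≤ b - a) (θ : ℕ → ℝ) (hθ1 : θ 1 = b)
    (hrec : ∀ k, 1 ≤ k → θ (k + 1) =
      ((θ k - a) * θ k * (1 - s) + (b - θ k) * θ k * (1 + s)) / (b - a)) :
    ∀ k, 1 ≤ k → (a + b) / 2 ≤ θ k := by
  have hba : (0:ℝ) < b - a := by linarith
  have key : ∀ k, 1 ≤ k → (a + b) / 2 ≤ θ k ∧ θ k ≤ b := by
    intro k hk
    induction k with
    | zero => omega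
    | succ n ih =>
      rcases Nat.lt_or_ge n 1 with h | hn
      · interval_cases n
        rw [hθ1]
        constructor <;> linarith
      · obtain ⟨ih1, ih2⟩ := ih hn
        have hθpos : 0 < θ n := by linarith
        have hsθ : 2 * s * θ n ≤ b - a := by nlinarith
        rw [hrec n hn]
        constructor
        · rw [le_div_iff₀ hba]
          nlinarith [mul_nonneg (sub_nonneg.2 ih1) (sub_nonneg.2 hsθ)]
        · rw [div_le_iff₀ hba]
          nlinarith [mul_nonneg hθpos.le (sub_nonneg.2 ih1)]
  intro k hk
  exact (key k hk).1
end

section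
/- Let a, b, s be real numbers with 0 ≤ a < b, 0 < s, and 2·s·b ≤ b − a. Define the sequence θ : ℕ → ℝ by θ 1 = b and θ (k+1) = ((θ k − a)·θ k·(1 − s) + (b − θ k)·θ k·(1 + s))/(b − a). Then θ (k+1) ≤ θ k for every k ≥ 1, i.e., the sequence is decreasing. -/
theorem vu_threshold_decreasing
    (a b s : ℝ) (ha : 0 ≤ a) (hab : a < b) (hs : 0 < s)
    (hsb : 2 * s * b ≤ b - a) (θ : ℕ → ℝ) (hθ1 : θ 1 = b)
    (hrec : ∀ k, 1 ≤ k → θ (k + 1) =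
      ((θ k - a) * θ k * (1 - s) + (b - θ k) * θ k * (1 + s)) / (b - a)) :
    ∀ k, 1 ≤ k → θ (k + 1) ≤ θ k := by
  have hba : (0:ℝ) < b - a := by linarith
  have hinv : ∀ k, 1 ≤ k → (a + b) / 2 ≤ θ k ∧ θ k ≤ b := by
    intro k hk
    induction k with
    | zero => omega
    | succ n ih =>
      rcases Nat.eq_or_lt_of_le hk with h | h
      · have : n + 1 = 1 := h.symm
        rw [this, hθ1]
        constructor <;> linarith
      · have hn : 1 ≤ n := by omega
        obtain ⟨h1, h2⟩ := ih hn
        have hθpos : 0 ≤ θ n := by linarith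
        rw [hrec n hn]
        constructor
        · rw [le_div_iff₀ hba]
          nlinarith [mul_nonneg (by linarith : (0:ℝ) ≤ θ n - (a + b)/2)
            (by nlinarith : (0:ℝ) ≤ (b - a) - 2 * s * θ n)]
        · rw [div_le_iff₀ hba]
          nlinarith [mul_nonneg hθpos (by linarith : (0:ℝ) ≤ 2 * θ n - (a + b))]
  intro k hk
  obtain ⟨h1, h2⟩ := hinv k hk
  have hθpos : 0 ≤ θ k := by linarith
  rw [hrec k hk, div_le_iff₀ hba]
  nlinarith [mul_nonneg hθpos (by linarith : (0:ℝ) ≤ 2 * θ k - (a + b))]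
end

section
/- Let a, b, s be real numbers with 0 ≤ a < b, 0 < s, and 2·s·b ≤ b − a. Define the sequence θ : ℕ → ℝ by θ 1 = b and θ (k+1) = ((θ k − a)·θ k·(1 − s) + (b − θ k)·θ k·(1 + s))/(b − a). Then (a + b)/2 ≤ θ k ≤ b for every k ≥ 1. -/
theorem vu_threshold_bounds
    (a b s : ℝ) (ha : 0 ≤ a) (hab : a < b) (hs : 0 < s)
    (hsb : 2 * s * b ≤ b - a) (θ : ℕ → ℝ) (hθ1 : θ 1 = b)
    (hrec : ∀ k, 1 ≤ k → θ (k + 1) =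
      ((θ k - a) * θ k * (1 - s) + (b - θ k) * θ k * (1 + s)) / (b - a)) :
    ∀ k, 1 ≤ k → (a + b) / 2 ≤ θ k ∧ θ k ≤ b := by
  have hba : 0 < b - a := sub_pos.mpr hab
  intro k hk
  induction k, hk using Nat.le_induction with
  | base => rw [hθ1]; constructor <;> linarith
  | succ n hn ih =>
    obtain ⟨h1, h2⟩ := ih
    have hθpos : 0 ≤ θ n := by linarith
    have hkey : 0 ≤ b - a - 2 * s * θ n := by nlinarith
    rw [hrec n hn]
    constructor
    · rw [le_div_iff₀ hba]
      nlinarith [mul_nonneg (by linarith : (0:ℝ) ≤ 2 * θ n - (a + b)) hkey]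
    · rw [div_le_iff₀ hba]
      nlinarith [mul_nonneg (mul_nonneg hs.le hθpos) (by linarith : (0:ℝ) ≤ 2 * θ n - (a + b)),
        mul_le_mul_of_nonneg_right h2 hba.le]
end

section
/- Let a, b, s be real numbers with 0 ≤ a < b, 0 < s, and 2·s·b ≤ b − a. Define the sequence θ : ℕ → ℝ by θ 1 = b and θ (k+1) = ((θ k − a)·θ k·(1 − s) + (b − θ k)·θ k·(1 + s))/(b − a). Then there exists a real number l such that θ k converges to l as k → ∞. -/
open Filter Topology

theorem vu_threshold_converges
    (a b s : ℝ) (ha : 0 ≤ a) (hab : a < b) (hs : 0 < s)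
    (hsb : 2 * s * b ≤ b - a) (θ : ℕ → ℝ) (hθ1 : θ 1 = b)
    (hrec : ∀ k, 1 ≤ k → θ (k + 1) =
      ((θ k - a) * θ k * (1 - s) + (b - θ k) * θ k * (1 + s)) / (b - a)) :
    ∃ l : ℝ, Tendsto θ atTop (𝓝 l) := by
  have hba : (0:ℝ) < b - a := by linarith
  have key : ∀ k, 1 ≤ k → (a + b) / 2 ≤ θ k ∧ θ k ≤ b := by
    intro k hk
    induction k with
    | zero => omega
    | succ n ih =>
      rcases Nat.lt_or_ge 1 (n + 1) with h | h
      · have hn : 1 ≤ n := by omega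
        obtain ⟨h1, h2⟩ := ih hn
        have ht : 0 < θ n := by linarith
        rw [hrec n hn]
        constructor
        · rw [le_div_iff₀ hba]
          nlinarith [mul_nonneg (mul_nonneg hs.le ht.le) (sub_nonneg.mpr h2),
            mul_nonneg (sub_nonneg.mpr h1) (by nlinarith : (0:ℝ) ≤ b - a - 2 * s * θ n)]
        · rw [div_le_iff₀ hba]
          nlinarith [mul_nonneg (mul_nonneg hs.le ht.le) (by linarith : (0:ℝ) ≤ 2 * θ n - (a + b))]
      · have : n + 1 = 1 := by omega
        rw [this, hθ1]
        constructor <;> linarith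
  have mono : ∀ k, 1 ≤ k → θ (k + 1) ≤ θ k := by
    intro k hk
    obtain ⟨h1, h2⟩ := key k hk
    have ht : 0 < θ k := by linarith
    rw [hrec k hk, div_le_iff₀ hba]
    nlinarith [mul_nonneg (mul_nonneg hs.le ht.le) (by linarith : (0:ℝ) ≤ 2 * θ k - (a + b))]
  have hanti : Antitone (fun n => θ (n + 1)) :=
    antitone_nat_of_succ_le fun n => mono (n + 1) (by omega)
  have hbdd : BddBelow (Set.range fun n => θ (n + 1)) := by
    refine ⟨(a + b) / 2, ?_⟩
    rintro x ⟨n, rfl⟩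
    exact (key (n + 1) (by omega)).1
  exact ⟨_, (tendsto_add_atTop_iff_nat 1).mp (tendsto_atTop_ciInf hanti hbdd)⟩
end
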